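/- If T is a type II tensor (all positive boost-weight components vanish) of rank n and S is type II of rank m, then any single metric contraction of T ⊗ S (contracting one index of T against one index of S using the null-frame inverse metric g^{01}=g^{10}=−1, g^{ij}=δ^{ij}) is again type II. -/
import Mathlib


/-- Boost weight of an index tuple. -/
def bw {N n : ℕ} (a : Fin n → Fin N) : ℤ :=
  ∑ i : Fin n, (if (a i : ℕ) = 0 then (1 : ℤ) else if (a i : ℕ) = 1 then -1 else 0)

/-- Inverse null-frame metric: g^{01} = g^{10} = -1, g^{ij} = δ^{ij} for spatial i,j. -/
def ginv {N : ℕ} (p q : Fin N) : ℝ :=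
  if (p : ℕ) = 0 ∧ (q : ℕ) = 1 then -1
  else if (p : ℕ) = 1 ∧ (q : ℕ) = 0 then -1
  else if 2 ≤ (p : ℕ) ∧ p = q then 1 else 0

def wgt {N : ℕ} (p : Fin N) : ℤ :=
  if (p : ℕ) = 0 then 1 else if (p : ℕ) = 1 then -1 else 0

lemma bw_snoc {N n : ℕ} (a : Fin n → Fin N) (p : Fin N) :
    bw (Fin.snoc a p) = bw a + wgt p := by
  unfold bw wgt
  rw [Fin.sum_univ_castSucc]
  simp

/-- A single metric contraction of a tensor product of two type II tensors is again
type II: the component at (a', c') of positive boost weight vanishes. -/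
theorem typeII_single_contraction {N n m : ℕ}
    (T : (Fin (n + 1) → Fin N) → ℝ) (S : (Fin (m + 1) → Fin N) → ℝ)
    (hT : ∀ a : Fin (n + 1) → Fin N, 0 < bw a → T a = 0)
    (hS : ∀ c : Fin (m + 1) → Fin N, 0 < bw c → S c = 0) :
    ∀ (a' : Fin n → Fin N) (c' : Fin m → Fin N), 0 < bw a' + bw c' →
      (∑ p : Fin N, ∑ q : Fin N,
        ginv p q * T (Fin.snoc a' p) * S (Fin.snoc c' q)) = 0 := by
  intro a' c' h
  apply Finset.sum_eq_zero; intro p _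
  apply Finset.sum_eq_zero; intro q _
  by_cases hg : ginv p q = 0
  · simp [hg]
  · have hw : wgt p + wgt q = 0 := by
      unfold ginv at hg
      unfold wgt
      split_ifs at hg with h1 h2 h3 <;> simp_all <;> omega
    rcases lt_or_ge 0 (bw (Fin.snoc a' p)) with hp | hp
    · simp [hT _ hp]
    · have hq : 0 < bw (Fin.snoc c' q) := by
        rw [bw_snoc] at hp ⊢
        omega
      simp [hS _ hq]
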